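/- arXiv:2104.08977 — 2 statements merged into one kernel-verified Lean document; each statement's English description precedes it below -/
import Mathlib

section
/- For any two random variables $Z, Z'$ supported in $[0,D]$ with CDFs $F_Z, F_{Z'}$, the variances satisfy $|\mathbb{V}(Z) - \mathbb{V}(Z')| \le 3D^2 \, \sup_{t} |F_Z(t) - F_{Z'}(t)|$; i.e., variance is a $3D^2$-Lipschitz risk functional with respect to the sup-norm on CDFs. -/
open Set MeasureTheory

private lemma prob_toReal_le_one {Ω : Type*} [MeasurableSpace Ω] (ν : Measure Ω)
    [IsProbabilityMeasure ν] (s : Set Ω) : (ν s).toReal ≤ 1 := by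
  have h : ν s ≤ 1 := prob_le_one
  simpa using ENNReal.toReal_mono ENNReal.one_ne_top h

private lemma prob_toReal_nonneg {Ω : Type*} [MeasurableSpace Ω] (ν : Measure Ω)
    (s : Set Ω) : 0 ≤ (ν s).toReal := ENNReal.toReal_nonneg

/-- `(μ {t < W}).toReal = 1 - (μ {W ≤ t}).toReal` for probability measures. -/
private lemma lt_toReal_eq {Ω : Type*} [MeasurableSpace Ω] (μ : Measure Ω)
    [IsProbabilityMeasure μ] {W : Ω → ℝ} (hW : Measurable W) (t : ℝ) :
    (μ {ω | t < W ω}).toReal = 1 - (μ {ω | W ω ≤ t}).toReal := by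
  have hset : {ω | t < W ω} = {ω | W ω ≤ t}ᶜ := by ext ω; simp [not_le]
  rw [hset, prob_compl_eq_one_sub (measurableSet_le hW measurable_const),
    ENNReal.toReal_sub_of_le prob_le_one ENNReal.one_ne_top]
  simp

/-- Difference of expectations bounded via layer cake. -/
private lemma moment_diff {Ω Ω' : Type*} [MeasurableSpace Ω] [MeasurableSpace Ω']
    (μ : Measure Ω) (μ' : Measure Ω') [IsProbabilityMeasure μ] [IsProbabilityMeasure μ']
    {M ε : ℝ} (hM : 0 < M)
    {W : Ω → ℝ} {W' : Ω' → ℝ} (hW : Measurable W) (hW' : Measurable W')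
    (hWs : ∀ᵐ ω ∂μ, W ω ∈ Icc 0 M) (hW's : ∀ᵐ ω ∂μ', W' ω ∈ Icc 0 M)
    (hdiff : ∀ᵐ t ∂(volume.restrict (Ioc 0 M)),
      |(μ {ω | t ≤ W ω}).toReal - (μ' {ω | t ≤ W' ω}).toReal| ≤ ε) :
    |(∫ ω, W ω ∂μ) - (∫ ω, W' ω ∂μ')| ≤ M * ε := by
  have intgW : Integrable W μ := by
    refine Integrable.mono' (integrable_const M) hW.aestronglyMeasurable ?_
    filter_upwards [hWs] with ω h
    rw [Real.norm_eq_abs, abs_of_nonneg h.1]; exact h.2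
  have intgW' : Integrable W' μ' := by
    refine Integrable.mono' (integrable_const M) hW'.aestronglyMeasurable ?_
    filter_upwards [hW's] with ω h
    rw [Real.norm_eq_abs, abs_of_nonneg h.1]; exact h.2
  have nnW : 0 ≤ᵐ[μ] W := hWs.mono fun ω h => h.1
  have nnW' : 0 ≤ᵐ[μ'] W' := hW's.mono fun ω h => h.1
  have bdW : W ≤ᵐ[μ] fun _ => M := hWs.mono fun ω h => h.2
  have bdW' : W' ≤ᵐ[μ'] fun _ => M := hW's.mono fun ω h => h.2
  rw [intgW.integral_eq_integral_Ioc_meas_le nnW bdW,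
    intgW'.integral_eq_integral_Ioc_meas_le nnW' bdW']
  set g : ℝ → ℝ := fun t => (μ {ω | t ≤ W ω}).toReal with hg
  set g' : ℝ → ℝ := fun t => (μ' {ω | t ≤ W' ω}).toReal with hg'
  have gant : Antitone (fun t => μ {ω | t ≤ W ω}) :=
    fun s t hst => measure_mono fun ω h => hst.trans h
  have g'ant : Antitone (fun t => μ' {ω | t ≤ W' ω}) :=
    fun s t hst => measure_mono fun ω h => hst.trans h
  have gmeas : Measurable g := gant.measurable.ennreal_toReal
  have g'meas : Measurable g' := g'ant.measurable.ennreal_toReal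
  have gint : IntegrableOn g (Ioc 0 M) := by
    refine Integrable.mono' ((integrableOn_const (C := (1:ℝ)) (hs := measure_Ioc_lt_top.ne)))
      gmeas.aestronglyMeasurable (Filter.Eventually.of_forall fun t => ?_)
    rw [Real.norm_eq_abs, abs_of_nonneg ENNReal.toReal_nonneg]
    exact prob_toReal_le_one μ _
  have g'int : IntegrableOn g' (Ioc 0 M) := by
    refine Integrable.mono' ((integrableOn_const (C := (1:ℝ)) (hs := measure_Ioc_lt_top.ne)))
      g'meas.aestronglyMeasurable (Filter.Eventually.of_forall fun t => ?_)
    rw [Real.norm_eq_abs, abs_of_nonneg ENNReal.toReal_nonneg]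
    exact prob_toReal_le_one μ' _
  change |(∫ t in Ioc 0 M, g t) - ∫ t in Ioc 0 M, g' t| ≤ M * ε
  rw [← integral_sub gint g'int]
  calc |∫ t in Ioc 0 M, (g t - g' t)| ≤ ∫ t in Ioc 0 M, |g t - g' t| := by
        simpa [Real.norm_eq_abs] using
          norm_integral_le_integral_norm (μ := volume.restrict (Ioc 0 M)) (fun t => g t - g' t)
    _ ≤ ∫ _t in Ioc 0 M, ε := integral_mono_ae (gint.sub g'int).abs (integrable_const ε) hdiff
    _ = M * ε := by
        rw [setIntegral_const, Measure.real, Real.volume_Ioc, smul_eq_mul]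
        rw [ENNReal.toReal_ofReal (by linarith)]
        ring

/-- Lipschitzness of variance (Lemma 4.3): for random variables `Z, Z'` supported in
`[0, D]`, `|Var(Z) - Var(Z')| ≤ 3 D² ⨆ t, |F_Z t - F_{Z'} t|`. -/
theorem variance_lipschitz
    {Ω Ω' : Type*} [MeasurableSpace Ω] [MeasurableSpace Ω']
    (μ : Measure Ω) (μ' : Measure Ω') [IsProbabilityMeasure μ] [IsProbabilityMeasure μ']
    (D : ℝ) (hD : 0 < D)
    (Z : Ω → ℝ) (Z' : Ω' → ℝ) (hZ : Measurable Z) (hZ' : Measurable Z')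
    (hZsupp : ∀ᵐ ω ∂μ, Z ω ∈ Icc 0 D) (hZ'supp : ∀ᵐ ω ∂μ', Z' ω ∈ Icc 0 D) :
    |((∫ ω, (Z ω) ^ 2 ∂μ) - (∫ ω, Z ω ∂μ) ^ 2)
        - ((∫ ω, (Z' ω) ^ 2 ∂μ') - (∫ ω, Z' ω ∂μ') ^ 2)|
      ≤ 3 * D ^ 2 * ⨆ t : ℝ, |(μ {ω | Z ω ≤ t}).toReal - (μ' {ω | Z' ω ≤ t}).toReal| := by
  set F : ℝ → ℝ := fun t => (μ {ω | Z ω ≤ t}).toReal with hF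
  set F' : ℝ → ℝ := fun t => (μ' {ω | Z' ω ≤ t}).toReal with hF'
  set ε : ℝ := ⨆ t : ℝ, |F t - F' t| with hε
  have hbdd : BddAbove (range fun t => |F t - F' t|) := by
    refine ⟨2, ?_⟩
    rintro x ⟨t, rfl⟩
    have h1 : F t ≤ 1 := prob_toReal_le_one μ _
    have h2 : F' t ≤ 1 := prob_toReal_le_one μ' _
    have h3 : 0 ≤ F t := prob_toReal_nonneg μ _
    have h4 : 0 ≤ F' t := prob_toReal_nonneg μ' _
    exact abs_le.mpr ⟨by linarith, by linarith⟩
  have hεt : ∀ t, |F t - F' t| ≤ ε := fun t => le_ciSup hbdd t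
  have hε0 : 0 ≤ ε := le_trans (abs_nonneg _) (hεt 0)
  -- first moments
  have h1 : |(∫ ω, Z ω ∂μ) - (∫ ω, Z' ω ∂μ')| ≤ D * ε := by
    refine moment_diff μ μ' hD hZ hZ' hZsupp hZ'supp ?_
    filter_upwards [meas_le_ae_eq_meas_lt μ (volume.restrict (Ioc 0 D)) Z,
      meas_le_ae_eq_meas_lt μ' (volume.restrict (Ioc 0 D)) Z'] with t ha hb
    rw [ha, hb, lt_toReal_eq μ hZ, lt_toReal_eq μ' hZ']
    calc |(1 - F t) - (1 - F' t)| = |F t - F' t| := by rw [abs_sub_comm]; ring_nf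
      _ ≤ ε := hεt t
  -- second moments
  have h2 : |(∫ ω, (Z ω) ^ 2 ∂μ) - (∫ ω, (Z' ω) ^ 2 ∂μ')| ≤ D ^ 2 * ε := by
    refine moment_diff μ μ' (pow_pos hD 2) (hZ.pow_const 2) (hZ'.pow_const 2)
      ?_ ?_ ?_
    · filter_upwards [hZsupp] with ω h
      exact ⟨pow_nonneg h.1 2, pow_le_pow_left₀ h.1 h.2 2⟩
    · filter_upwards [hZ'supp] with ω h
      exact ⟨pow_nonneg h.1 2, pow_le_pow_left₀ h.1 h.2 2⟩
    · filter_upwards [meas_le_ae_eq_meas_lt μ (volume.restrict (Ioc 0 (D ^ 2)))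
        (fun ω => Z ω ^ 2),
        meas_le_ae_eq_meas_lt μ' (volume.restrict (Ioc 0 (D ^ 2))) (fun ω => Z' ω ^ 2),
        ae_restrict_mem measurableSet_Ioc] with t ha hb ht
      rw [ha, hb, lt_toReal_eq μ (hZ.pow_const 2), lt_toReal_eq μ' (hZ'.pow_const 2)]
      have hsq : μ {ω | Z ω ^ 2 ≤ t} = μ {ω | Z ω ≤ Real.sqrt t} := by
        refine measure_congr (Filter.eventuallyEq_set.mpr ?_)
        filter_upwards [hZsupp] with ω hω
        exact (Real.le_sqrt hω.1 ht.1.le).symm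
      have hsq' : μ' {ω | Z' ω ^ 2 ≤ t} = μ' {ω | Z' ω ≤ Real.sqrt t} := by
        refine measure_congr (Filter.eventuallyEq_set.mpr ?_)
        filter_upwards [hZ'supp] with ω hω
        exact (Real.le_sqrt hω.1 ht.1.le).symm
      rw [hsq, hsq']
      calc |(1 - F (Real.sqrt t)) - (1 - F' (Real.sqrt t))|
          = |F (Real.sqrt t) - F' (Real.sqrt t)| := by rw [abs_sub_comm]; ring_nf
        _ ≤ ε := hεt _
  -- bounds on the means
  have intgZ : Integrable Z μ := by
    refine Integrable.mono' (integrable_const D) hZ.aestronglyMeasurable ?_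
    filter_upwards [hZsupp] with ω h
    rw [Real.norm_eq_abs, abs_of_nonneg h.1]; exact h.2
  have intgZ' : Integrable Z' μ' := by
    refine Integrable.mono' (integrable_const D) hZ'.aestronglyMeasurable ?_
    filter_upwards [hZ'supp] with ω h
    rw [Real.norm_eq_abs, abs_of_nonneg h.1]; exact h.2
  have hm1 : 0 ≤ ∫ ω, Z ω ∂μ := integral_nonneg_of_ae (hZsupp.mono fun ω h => h.1)
  have hm2 : (∫ ω, Z ω ∂μ) ≤ D := by
    calc (∫ ω, Z ω ∂μ) ≤ ∫ _ω, D ∂μ :=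
          integral_mono_ae intgZ (integrable_const D) (hZsupp.mono fun ω h => h.2)
      _ = D := by simp
  have hm1' : 0 ≤ ∫ ω, Z' ω ∂μ' := integral_nonneg_of_ae (hZ'supp.mono fun ω h => h.1)
  have hm2' : (∫ ω, Z' ω ∂μ') ≤ D := by
    calc (∫ ω, Z' ω ∂μ') ≤ ∫ _ω, D ∂μ' :=
          integral_mono_ae intgZ' (integrable_const D) (hZ'supp.mono fun ω h => h.2)
      _ = D := by simp
  -- assemble
  set A := ∫ ω, (Z ω) ^ 2 ∂μ
  set B := ∫ ω, (Z' ω) ^ 2 ∂μ'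
  set a := ∫ ω, Z ω ∂μ
  set b := ∫ ω, Z' ω ∂μ'
  have key : |(A - a ^ 2) - (B - b ^ 2)| ≤ |A - B| + |a ^ 2 - b ^ 2| := by
    have : (A - a ^ 2) - (B - b ^ 2) = (A - B) + (b ^ 2 - a ^ 2) := by ring
    rw [this]
    calc |(A - B) + (b ^ 2 - a ^ 2)| ≤ |A - B| + |b ^ 2 - a ^ 2| := abs_add_le _ _
      _ = |A - B| + |a ^ 2 - b ^ 2| := by rw [abs_sub_comm (b ^ 2) (a ^ 2)]
  have hsq : |a ^ 2 - b ^ 2| ≤ 2 * D * (D * ε) := by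
    rcases abs_le.mp h1 with ⟨hl, hr⟩
    refine abs_le.mpr ⟨?_, ?_⟩ <;> nlinarith
  calc |(A - a ^ 2) - (B - b ^ 2)| ≤ |A - B| + |a ^ 2 - b ^ 2| := key
    _ ≤ D ^ 2 * ε + 2 * D * (D * ε) := add_le_add h2 hsq
    _ = 3 * D ^ 2 * ε := by ring
end

section
/- The variance of the doubly robust estimator satisfies, for each $t$: $\mathbb{V}_{\mathbb{P}_\beta}[\widehat{F}_{DR}(t)] = \frac{1}{n}\mathbb{E}_{\mathbb{P}_\beta}[w(A,X)^2\sigma^2(t;X,A)] + \frac{1}{n}\mathbb{V}_{\mathbb{P}_\beta}[\mathbb{E}_{\mathbb{P}_\beta}[w(A,X)G(t;X,A)\mid X]] + \frac{1}{n}\mathbb{E}_{\mathbb{P}_\beta}[\mathbb{V}_{\mathbb{P}_\beta}[w(A,X)(G(t;X,A)-\overline{G}(t;X,A))\mid X]]$. In particular, the third term depends only on the model error $G - \overline{G}$ rather than on $G$ itself. -/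
open Set MeasureTheory

section Aux

variable {Ω : Type*} {m0 : MeasurableSpace Ω} {μ : Measure Ω} [IsProbabilityMeasure μ]

/-- a.e. bounded functions -/
def AEBdd (μ : Measure Ω) (f : Ω → ℝ) : Prop := ∃ C, ∀ᵐ p ∂μ, |f p| ≤ C

lemma AEBdd.mul {f g : Ω → ℝ} (hf : AEBdd μ f) (hg : AEBdd μ g) :
    AEBdd μ fun p => f p * g p := by
  obtain ⟨Cf, hf⟩ := hf; obtain ⟨Cg, hg⟩ := hg
  refine ⟨|Cf| * |Cg|, ?_⟩
  filter_upwards [hf, hg] with p h1 h2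
  rw [abs_mul]
  exact mul_le_mul (h1.trans (le_abs_self _)) (h2.trans (le_abs_self _)) (abs_nonneg _)
    (abs_nonneg _)

lemma AEBdd.add {f g : Ω → ℝ} (hf : AEBdd μ f) (hg : AEBdd μ g) :
    AEBdd μ fun p => f p + g p := by
  obtain ⟨Cf, hf⟩ := hf; obtain ⟨Cg, hg⟩ := hg
  refine ⟨Cf + Cg, ?_⟩
  filter_upwards [hf, hg] with p h1 h2
  exact (abs_add_le _ _).trans (add_le_add h1 h2)

lemma AEBdd.sub {f g : Ω → ℝ} (hf : AEBdd μ f) (hg : AEBdd μ g) :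
    AEBdd μ fun p => f p - g p := by
  obtain ⟨Cf, hf⟩ := hf; obtain ⟨Cg, hg⟩ := hg
  refine ⟨Cf + Cg, ?_⟩
  filter_upwards [hf, hg] with p h1 h2
  exact (abs_sub _ _).trans (add_le_add h1 h2)

lemma AEBdd.pow {f : Ω → ℝ} (hf : AEBdd μ f) (k : ℕ) :
    AEBdd μ fun p => f p ^ k := by
  obtain ⟨Cf, hf⟩ := hf
  refine ⟨|Cf| ^ k, ?_⟩
  filter_upwards [hf] with p h1
  rw [abs_pow]
  exact pow_le_pow_left₀ (abs_nonneg _) (h1.trans (le_abs_self _)) k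

lemma aeBdd_const (c : ℝ) : AEBdd μ fun _ => c :=
  ⟨|c|, Filter.Eventually.of_forall fun _ => by simp⟩

lemma aux_intBdd {f : Ω → ℝ} (hf : AEStronglyMeasurable f μ) {C : ℝ}
    (h : ∀ᵐ p ∂μ, |f p| ≤ C) : Integrable f μ :=
  (integrable_const C).mono' hf (by simpa [Real.norm_eq_abs] using h)

lemma aux_intBdd' {f : Ω → ℝ} (hf : Measurable f) (h : AEBdd μ f) : Integrable f μ := by
  obtain ⟨C, h⟩ := h
  exact aux_intBdd hf.aestronglyMeasurable h

lemma aux_aeBdd {m : MeasurableSpace Ω} (hm : m ≤ m0) {Y Z : Ω → ℝ}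
    (hY : Integrable Y μ) (hb : AEBdd μ Y)
    (hZ : μ[Y|m] =ᵐ[μ] Z) : AEBdd μ Z := by
  obtain ⟨C, hb⟩ := hb
  refine ⟨C, ?_⟩
  have h1 : μ[Y|m] ≤ᵐ[μ] μ[fun _ => C|m] :=
    condExp_mono hY (integrable_const C) (hb.mono fun p h => (abs_le.1 h).2)
  have h2 : μ[fun _ => -C|m] ≤ᵐ[μ] μ[Y|m] :=
    condExp_mono (integrable_const _) hY (hb.mono fun p h => (abs_le.1 h).1)
  rw [condExp_const hm] at h1
  rw [condExp_const hm] at h2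
  filter_upwards [h1, h2, hZ] with p u1 u2 ez
  rw [← ez]
  exact abs_le.2 ⟨u2, u1⟩

lemma aux_pullout {m : MeasurableSpace Ω} (hm : m ≤ m0) {φ Y Z : Ω → ℝ}
    (hφ : StronglyMeasurable[m] φ) (hY : Integrable Y μ)
    (hφb : AEBdd μ φ)
    (hZ : μ[Y|m] =ᵐ[μ] Z) :
    ∫ p, φ p * Y p ∂μ = ∫ p, φ p * Z p ∂μ := by
  obtain ⟨Cφ, hφb⟩ := hφb
  have hφm : AEStronglyMeasurable[m0] φ μ := (hφ.mono hm).aestronglyMeasurable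
  have hφY : Integrable (φ * Y) μ :=
    hY.bdd_mul hφm (hφb.mono fun p h => by simpa [Real.norm_eq_abs] using h)
  calc ∫ p, φ p * Y p ∂μ = ∫ p, (μ[φ * Y|m]) p ∂μ := (integral_condExp hm).symm
    _ = ∫ p, (φ * μ[Y|m]) p ∂μ :=
        integral_congr_ae (condExp_mul_of_stronglyMeasurable_left hφ hφY hY)
    _ = ∫ p, φ p * Z p ∂μ := integral_congr_ae (hZ.mono fun p h => by simp [h])

lemma aux_integral_condexp_eq {m : MeasurableSpace Ω} (hm : m ≤ m0) {Y Z : Ω → ℝ}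
    (hZ : μ[Y|m] =ᵐ[μ] Z) : ∫ p, Y p ∂μ = ∫ p, Z p ∂μ :=
  (integral_condExp hm).symm.trans (integral_congr_ae hZ)

end Aux

/-- Variance decomposition of the doubly robust CDF estimator (Lemma 5.2).
`G` is a version of `E[1{R ≤ t} | X, A]` (so `σ² = G (1 - G)`), `Hm` a version of
`E[w G | X]`, `Hd` a version of `E[w (G - Ḡ) | X]`, and `Kd` a version of
`E[(w (G - Ḡ))² | X]`, so the third term `E[V[w (G - Ḡ) | X]] = E[Kd - Hd²]`
depends only on the model error `G - Ḡ`. Then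
`V[F̂_DR(t)] = (1/n) (E[w² σ²] + V[Hm] + E[Kd - Hd²])`. -/
theorem dr_estimator_variance
    {𝒳 𝒜 : Type*} [MeasurableSpace 𝒳] [MeasurableSpace 𝒜]
    (μβ : Measure (𝒳 × 𝒜 × ℝ)) [IsProbabilityMeasure μβ]
    (w : 𝒳 × 𝒜 → ℝ) (hw : Measurable w) (hw0 : ∀ p, 0 ≤ w p)
    (wmax : ℝ) (hwb : ∀ p, w p ≤ wmax)
    (t : ℝ)
    (Gbar : 𝒳 → 𝒜 → ℝ) (hGbar : Measurable fun p : 𝒳 × 𝒜 => Gbar p.1 p.2)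
    (hGbarr : ∀ x a, Gbar x a ∈ Icc (0:ℝ) 1)
    (Gbarπ : 𝒳 → ℝ) (hGbarπ : Measurable Gbarπ)
    (hGbarπcond : μβ[fun p : 𝒳 × 𝒜 × ℝ => w (p.1, p.2.1) * Gbar p.1 p.2.1 |
        MeasurableSpace.comap (fun p : 𝒳 × 𝒜 × ℝ => p.1) inferInstance]
        =ᵐ[μβ] fun p => Gbarπ p.1)
    (G : 𝒳 × 𝒜 → ℝ) (hG : Measurable G) (hGr : ∀ p, G p ∈ Icc (0:ℝ) 1)
    (hGcond : μβ[fun p : 𝒳 × 𝒜 × ℝ => if p.2.2 ≤ t then (1:ℝ) else 0 |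
        MeasurableSpace.comap (fun p : 𝒳 × 𝒜 × ℝ => (p.1, p.2.1)) inferInstance]
        =ᵐ[μβ] fun p => G (p.1, p.2.1))
    (Hm Hd Kd : 𝒳 → ℝ) (hHm : Measurable Hm) (hHd : Measurable Hd) (hKd : Measurable Kd)
    (hHmcond : μβ[fun p : 𝒳 × 𝒜 × ℝ => w (p.1, p.2.1) * G (p.1, p.2.1) |
        MeasurableSpace.comap (fun p : 𝒳 × 𝒜 × ℝ => p.1) inferInstance]
        =ᵐ[μβ] fun p => Hm p.1)
    (hHdcond : μβ[fun p : 𝒳 × 𝒜 × ℝ =>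
          w (p.1, p.2.1) * (G (p.1, p.2.1) - Gbar p.1 p.2.1) |
        MeasurableSpace.comap (fun p : 𝒳 × 𝒜 × ℝ => p.1) inferInstance]
        =ᵐ[μβ] fun p => Hd p.1)
    (hKdcond : μβ[fun p : 𝒳 × 𝒜 × ℝ =>
          (w (p.1, p.2.1) * (G (p.1, p.2.1) - Gbar p.1 p.2.1)) ^ 2 |
        MeasurableSpace.comap (fun p : 𝒳 × 𝒜 × ℝ => p.1) inferInstance]
        =ᵐ[μβ] fun p => Kd p.1)
    (n : ℕ) (hn : 0 < n) :
    (∫ ωs, ((1 / (n:ℝ)) * ∑ i : Fin n,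
          (w ((ωs i).1, (ωs i).2.1) *
              ((if (ωs i).2.2 ≤ t then (1:ℝ) else 0) - Gbar (ωs i).1 (ωs i).2.1)
            + Gbarπ (ωs i).1)) ^ 2
        ∂(Measure.pi fun _ : Fin n => μβ))
      - (∫ ωs, (1 / (n:ℝ)) * ∑ i : Fin n,
          (w ((ωs i).1, (ωs i).2.1) *
              ((if (ωs i).2.2 ≤ t then (1:ℝ) else 0) - Gbar (ωs i).1 (ωs i).2.1)
            + Gbarπ (ωs i).1)
        ∂(Measure.pi fun _ : Fin n => μβ)) ^ 2
    = (1 / (n:ℝ)) *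
        ((∫ p, (w (p.1, p.2.1)) ^ 2 * (G (p.1, p.2.1) * (1 - G (p.1, p.2.1))) ∂μβ)
          + ((∫ p, (Hm p.1) ^ 2 ∂μβ) - (∫ p, Hm p.1 ∂μβ) ^ 2)
          + (∫ p, (Kd p.1 - (Hd p.1) ^ 2) ∂μβ)) := by
  classical
  -- nonemptiness and sign of wmax
  have hne : Nonempty (𝒳 × 𝒜 × ℝ) := by
    by_contra h
    rw [not_nonempty_iff] at h
    have h1 : μβ Set.univ = 1 := measure_univ
    rw [Set.univ_eq_empty_iff.mpr h, measure_empty] at h1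
    exact one_ne_zero h1.symm
  obtain ⟨q⟩ := hne
  have hwmax0 : 0 ≤ wmax := le_trans (hw0 (q.1, q.2.1)) (hwb _)
  -- σ-algebras
  have hm1 : MeasurableSpace.comap (fun p : 𝒳 × 𝒜 × ℝ => p.1) inferInstance
      ≤ (inferInstance : MeasurableSpace (𝒳 × 𝒜 × ℝ)) :=
    Measurable.comap_le (by exact measurable_fst)
  have hm2 : MeasurableSpace.comap (fun p : 𝒳 × 𝒜 × ℝ => (p.1, p.2.1)) inferInstance
      ≤ (inferInstance : MeasurableSpace (𝒳 × 𝒜 × ℝ)) :=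
    Measurable.comap_le (by exact (measurable_fst.prodMk measurable_snd.fst))
  have hπ1 : Measurable[MeasurableSpace.comap (fun p : 𝒳 × 𝒜 × ℝ => p.1) inferInstance]
      (fun p : 𝒳 × 𝒜 × ℝ => p.1) := Measurable.of_comap_le le_rfl
  have hπ2 : Measurable[MeasurableSpace.comap (fun p : 𝒳 × 𝒜 × ℝ => (p.1, p.2.1)) inferInstance]
      (fun p : 𝒳 × 𝒜 × ℝ => (p.1, p.2.1)) := Measurable.of_comap_le le_rfl
  -- measurability of basic functions
  have hWMeas : Measurable (fun p : 𝒳 × 𝒜 × ℝ => w (p.1, p.2.1)) :=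
    hw.comp (measurable_fst.prodMk measurable_snd.fst)
  have hIndMeas : Measurable (fun p : 𝒳 × 𝒜 × ℝ => if p.2.2 ≤ t then (1:ℝ) else 0) :=
    Measurable.ite (measurableSet_le measurable_snd.snd measurable_const)
      measurable_const measurable_const
  have hGbMeas : Measurable (fun p : 𝒳 × 𝒜 × ℝ => Gbar p.1 p.2.1) :=
    hGbar.comp (measurable_fst.prodMk measurable_snd.fst)
  have hGfMeas : Measurable (fun p : 𝒳 × 𝒜 × ℝ => G (p.1, p.2.1)) :=
    hG.comp (measurable_fst.prodMk measurable_snd.fst)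
  have hGpMeas : Measurable (fun p : 𝒳 × 𝒜 × ℝ => Gbarπ p.1) := hGbarπ.comp measurable_fst
  have hHmMeas : Measurable (fun p : 𝒳 × 𝒜 × ℝ => Hm p.1) := hHm.comp measurable_fst
  have hHdMeas : Measurable (fun p : 𝒳 × 𝒜 × ℝ => Hd p.1) := hHd.comp measurable_fst
  have hKdMeas : Measurable (fun p : 𝒳 × 𝒜 × ℝ => Kd p.1) := hKd.comp measurable_fst
  -- pointwise bounds
  have bW : ∀ p : 𝒳 × 𝒜 × ℝ, |w (p.1, p.2.1)| ≤ wmax := fun p => by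
    rw [abs_of_nonneg (hw0 _)]; exact hwb _
  have bInd : ∀ p : 𝒳 × 𝒜 × ℝ, |if p.2.2 ≤ t then (1:ℝ) else 0| ≤ 1 := fun p => by
    split_ifs <;> simp
  have bGb : ∀ p : 𝒳 × 𝒜 × ℝ, |Gbar p.1 p.2.1| ≤ 1 := fun p =>
    abs_le.2 ⟨by linarith [(hGbarr p.1 p.2.1).1], (hGbarr p.1 p.2.1).2⟩
  have bGf : ∀ p : 𝒳 × 𝒜 × ℝ, |G (p.1, p.2.1)| ≤ 1 := fun p =>
    abs_le.2 ⟨by linarith [(hGr (p.1, p.2.1)).1], (hGr (p.1, p.2.1)).2⟩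
  -- AEBdd facts
  have BW : AEBdd μβ fun p : 𝒳 × 𝒜 × ℝ => w (p.1, p.2.1) := ⟨wmax, .of_forall bW⟩
  have BInd : AEBdd μβ fun p : 𝒳 × 𝒜 × ℝ => if p.2.2 ≤ t then (1:ℝ) else 0 :=
    ⟨1, .of_forall bInd⟩
  have BGb : AEBdd μβ fun p : 𝒳 × 𝒜 × ℝ => Gbar p.1 p.2.1 := ⟨1, .of_forall bGb⟩
  have BGf : AEBdd μβ fun p : 𝒳 × 𝒜 × ℝ => G (p.1, p.2.1) := ⟨1, .of_forall bGf⟩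
  -- integrability of conditional targets
  have intWGb : Integrable (fun p : 𝒳 × 𝒜 × ℝ => w (p.1, p.2.1) * Gbar p.1 p.2.1) μβ :=
    aux_intBdd' (hWMeas.mul hGbMeas) (BW.mul BGb)
  have intWGf : Integrable (fun p : 𝒳 × 𝒜 × ℝ => w (p.1, p.2.1) * G (p.1, p.2.1)) μβ :=
    aux_intBdd' (hWMeas.mul hGfMeas) (BW.mul BGf)
  have intInd : Integrable (fun p : 𝒳 × 𝒜 × ℝ => if p.2.2 ≤ t then (1:ℝ) else 0) μβ :=
    aux_intBdd' hIndMeas BInd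
  have BGp : AEBdd μβ fun p : 𝒳 × 𝒜 × ℝ => Gbarπ p.1 :=
    aux_aeBdd hm1 intWGb (BW.mul BGb) hGbarπcond
  have BHm : AEBdd μβ fun p : 𝒳 × 𝒜 × ℝ => Hm p.1 :=
    aux_aeBdd hm1 intWGf (BW.mul BGf) hHmcond
  have intWGfGb : Integrable
      (fun p : 𝒳 × 𝒜 × ℝ => w (p.1, p.2.1) * (G (p.1, p.2.1) - Gbar p.1 p.2.1)) μβ :=
    aux_intBdd' (hWMeas.mul (hGfMeas.sub hGbMeas)) (BW.mul (BGf.sub BGb))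
  have intWGfGb2 : Integrable
      (fun p : 𝒳 × 𝒜 × ℝ => (w (p.1, p.2.1) * (G (p.1, p.2.1) - Gbar p.1 p.2.1)) ^ 2) μβ :=
    aux_intBdd' ((hWMeas.mul (hGfMeas.sub hGbMeas)).pow_const 2)
      ((BW.mul (BGf.sub BGb)).pow 2)
  have BHd : AEBdd μβ fun p : 𝒳 × 𝒜 × ℝ => Hd p.1 :=
    aux_aeBdd hm1 intWGfGb (BW.mul (BGf.sub BGb)) hHdcond
  have BKd : AEBdd μβ fun p : 𝒳 × 𝒜 × ℝ => Kd p.1 :=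
    aux_aeBdd hm1 intWGfGb2 ((BW.mul (BGf.sub BGb)).pow 2) hKdcond
  -- more integrability
  have intGp : Integrable (fun p : 𝒳 × 𝒜 × ℝ => Gbarπ p.1) μβ := aux_intBdd' hGpMeas BGp
  have intGpGp : Integrable (fun p : 𝒳 × 𝒜 × ℝ => Gbarπ p.1 * Gbarπ p.1) μβ :=
    aux_intBdd' (hGpMeas.mul hGpMeas) (BGp.mul BGp)
  have intGpHm : Integrable (fun p : 𝒳 × 𝒜 × ℝ => Gbarπ p.1 * Hm p.1) μβ :=
    aux_intBdd' (hGpMeas.mul hHmMeas) (BGp.mul BHm)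
  have intHm2 : Integrable (fun p : 𝒳 × 𝒜 × ℝ => Hm p.1 ^ 2) μβ :=
    aux_intBdd' (hHmMeas.pow_const 2) (BHm.pow 2)
  have intKd : Integrable (fun p : 𝒳 × 𝒜 × ℝ => Kd p.1) μβ := aux_intBdd' hKdMeas BKd
  have intHd2 : Integrable (fun p : 𝒳 × 𝒜 × ℝ => Hd p.1 ^ 2) μβ :=
    aux_intBdd' (hHdMeas.pow_const 2) (BHd.pow 2)
  have intWInd : Integrable
      (fun p : 𝒳 × 𝒜 × ℝ => w (p.1, p.2.1) * (if p.2.2 ≤ t then (1:ℝ) else 0)) μβ :=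
    aux_intBdd' (hWMeas.mul hIndMeas) (BW.mul BInd)
  have intGpWGf : Integrable
      (fun p : 𝒳 × 𝒜 × ℝ => Gbarπ p.1 * (w (p.1, p.2.1) * G (p.1, p.2.1))) μβ :=
    aux_intBdd' (hGpMeas.mul (hWMeas.mul hGfMeas)) (BGp.mul (BW.mul BGf))
  have intGpWGb : Integrable
      (fun p : 𝒳 × 𝒜 × ℝ => Gbarπ p.1 * (w (p.1, p.2.1) * Gbar p.1 p.2.1)) μβ :=
    aux_intBdd' (hGpMeas.mul (hWMeas.mul hGbMeas)) (BGp.mul (BW.mul BGb))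
  have intA1 : Integrable
      (fun p : 𝒳 × 𝒜 × ℝ => (w (p.1, p.2.1)) ^ 2 * (G (p.1, p.2.1) * (1 - G (p.1, p.2.1)))) μβ :=
    aux_intBdd' ((hWMeas.pow_const 2).mul (hGfMeas.mul (measurable_const.sub hGfMeas)))
      ((BW.pow 2).mul (BGf.mul ((aeBdd_const 1).sub BGf)))
  have intc : Integrable (fun p : 𝒳 × 𝒜 × ℝ =>
      w (p.1, p.2.1) ^ 2 * Gbar p.1 p.2.1 ^ 2
        - 2 * (Gbarπ p.1 * (w (p.1, p.2.1) * Gbar p.1 p.2.1))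
        + Gbarπ p.1 * Gbarπ p.1) μβ :=
    aux_intBdd'
      ((((hWMeas.pow_const 2).mul (hGbMeas.pow_const 2)).sub
        ((hGpMeas.mul (hWMeas.mul hGbMeas)).const_mul 2)).add (hGpMeas.mul hGpMeas))
      ((((BW.pow 2).mul (BGb.pow 2)).sub
        ((aeBdd_const 2).mul (BGp.mul (BW.mul BGb)))).add (BGp.mul BGp))
  -- the φ used in the pull-out step below
  have hφsm : StronglyMeasurable[MeasurableSpace.comap
      (fun p : 𝒳 × 𝒜 × ℝ => (p.1, p.2.1)) inferInstance] (fun p : 𝒳 × 𝒜 × ℝ =>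
      w (p.1, p.2.1) ^ 2 * (1 - 2 * Gbar p.1 p.2.1) + 2 * (w (p.1, p.2.1) * Gbarπ p.1)) := by
    have h1 : Measurable[MeasurableSpace.comap
        (fun p : 𝒳 × 𝒜 × ℝ => (p.1, p.2.1)) inferInstance]
        (fun p : 𝒳 × 𝒜 × ℝ => w (p.1, p.2.1)) := hw.comp hπ2
    have h2 : Measurable[MeasurableSpace.comap
        (fun p : 𝒳 × 𝒜 × ℝ => (p.1, p.2.1)) inferInstance]
        (fun p : 𝒳 × 𝒜 × ℝ => Gbar p.1 p.2.1) := hGbar.comp hπ2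
    have h3 : Measurable[MeasurableSpace.comap
        (fun p : 𝒳 × 𝒜 × ℝ => (p.1, p.2.1)) inferInstance]
        (fun p : 𝒳 × 𝒜 × ℝ => Gbarπ p.1) :=
      by exact hGbarπ.comp hπ2.fst
    exact (((h1.pow_const 2).mul (measurable_const.sub (h2.const_mul 2))).add
      ((h1.mul h3).const_mul 2)).stronglyMeasurable
  have hφB : AEBdd μβ (fun p : 𝒳 × 𝒜 × ℝ =>
      w (p.1, p.2.1) ^ 2 * (1 - 2 * Gbar p.1 p.2.1) + 2 * (w (p.1, p.2.1) * Gbarπ p.1)) :=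
    ((BW.pow 2).mul ((aeBdd_const 1).sub ((aeBdd_const 2).mul BGb))).add
      ((aeBdd_const 2).mul (BW.mul BGp))
  have intφGf : Integrable (fun p : 𝒳 × 𝒜 × ℝ =>
      (w (p.1, p.2.1) ^ 2 * (1 - 2 * Gbar p.1 p.2.1) + 2 * (w (p.1, p.2.1) * Gbarπ p.1))
        * G (p.1, p.2.1)) μβ :=
    aux_intBdd'
      ((((hWMeas.pow_const 2).mul (measurable_const.sub (hGbMeas.const_mul 2))).add
        ((hWMeas.mul hGpMeas).const_mul 2)).mul hGfMeas)
      (((((BW.pow 2).mul ((aeBdd_const 1).sub ((aeBdd_const 2).mul BGb))).add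
        ((aeBdd_const 2).mul (BW.mul BGp)))).mul BGf)
  have intφInd : Integrable (fun p : 𝒳 × 𝒜 × ℝ =>
      (w (p.1, p.2.1) ^ 2 * (1 - 2 * Gbar p.1 p.2.1) + 2 * (w (p.1, p.2.1) * Gbarπ p.1))
        * (if p.2.2 ≤ t then (1:ℝ) else 0)) μβ :=
    aux_intBdd'
      ((((hWMeas.pow_const 2).mul (measurable_const.sub (hGbMeas.const_mul 2))).add
        ((hWMeas.mul hGpMeas).const_mul 2)).mul hIndMeas)
      (((((BW.pow 2).mul ((aeBdd_const 1).sub ((aeBdd_const 2).mul BGb))).add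
        ((aeBdd_const 2).mul (BW.mul BGp)))).mul BInd)
  have int2GpWGf : Integrable
      (fun p : 𝒳 × 𝒜 × ℝ => 2 * (Gbarπ p.1 * (w (p.1, p.2.1) * G (p.1, p.2.1)))) μβ :=
    intGpWGf.const_mul 2
  have int2GpWGb : Integrable
      (fun p : 𝒳 × 𝒜 × ℝ => 2 * (Gbarπ p.1 * (w (p.1, p.2.1) * Gbar p.1 p.2.1))) μβ :=
    intGpWGb.const_mul 2
  have intsub2 : Integrable
      (fun p : 𝒳 × 𝒜 × ℝ => 2 * (Gbarπ p.1 * (w (p.1, p.2.1) * G (p.1, p.2.1)))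
        - 2 * (Gbarπ p.1 * (w (p.1, p.2.1) * Gbar p.1 p.2.1))) μβ :=
    int2GpWGf.sub int2GpWGb
  have intA12 : Integrable (fun p : 𝒳 × 𝒜 × ℝ =>
      (w (p.1, p.2.1)) ^ 2 * (G (p.1, p.2.1) * (1 - G (p.1, p.2.1)))
        + (w (p.1, p.2.1) * (G (p.1, p.2.1) - Gbar p.1 p.2.1)) ^ 2) μβ :=
    intA1.add intWGfGb2
  have intRest : Integrable (fun p : 𝒳 × 𝒜 × ℝ =>
      2 * (Gbarπ p.1 * (w (p.1, p.2.1) * G (p.1, p.2.1)))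
        - 2 * (Gbarπ p.1 * (w (p.1, p.2.1) * Gbar p.1 p.2.1))
        + Gbarπ p.1 * Gbarπ p.1) μβ := intsub2.add intGpGp
  have hWsm2 : StronglyMeasurable[MeasurableSpace.comap
      (fun p : 𝒳 × 𝒜 × ℝ => (p.1, p.2.1)) inferInstance]
      (fun p : 𝒳 × 𝒜 × ℝ => w (p.1, p.2.1)) :=
    (hw.comp hπ2).stronglyMeasurable
  have hGpsm1 : StronglyMeasurable[MeasurableSpace.comap
      (fun p : 𝒳 × 𝒜 × ℝ => p.1) inferInstance]
      (fun p : 𝒳 × 𝒜 × ℝ => Gbarπ p.1) :=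
    (hGbarπ.comp hπ1).stronglyMeasurable
  -- the single-sample function F
  set F : (𝒳 × 𝒜 × ℝ) → ℝ := fun p =>
    w (p.1, p.2.1) * ((if p.2.2 ≤ t then (1:ℝ) else 0) - Gbar p.1 p.2.1) + Gbarπ p.1
    with hFdef
  have hFMeas : Measurable F := by
    rw [hFdef]; exact (hWMeas.mul (hIndMeas.sub hGbMeas)).add hGpMeas
  have hFB : AEBdd μβ F := by
    rw [hFdef]; exact (BW.mul (BInd.sub BGb)).add BGp
  -- mean of F
  have hEF : ∫ p, F p ∂μβ = ∫ p, Hm p.1 ∂μβ := by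
    calc ∫ p, F p ∂μβ
        = ∫ p : 𝒳 × 𝒜 × ℝ,
            (w (p.1, p.2.1) * (if p.2.2 ≤ t then (1:ℝ) else 0)
              - w (p.1, p.2.1) * Gbar p.1 p.2.1) + Gbarπ p.1 ∂μβ := by
          refine integral_congr_ae (Filter.Eventually.of_forall fun p => ?_)
          simp only [hFdef]; ring
      _ = (∫ p : 𝒳 × 𝒜 × ℝ,
            (w (p.1, p.2.1) * (if p.2.2 ≤ t then (1:ℝ) else 0)
              - w (p.1, p.2.1) * Gbar p.1 p.2.1) ∂μβ) + ∫ p : 𝒳 × 𝒜 × ℝ, Gbarπ p.1 ∂μβ :=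
          integral_add (intWInd.sub intWGb) intGp
      _ = ((∫ p : 𝒳 × 𝒜 × ℝ, w (p.1, p.2.1) * (if p.2.2 ≤ t then (1:ℝ) else 0) ∂μβ)
            - ∫ p : 𝒳 × 𝒜 × ℝ, w (p.1, p.2.1) * Gbar p.1 p.2.1 ∂μβ)
            + ∫ p : 𝒳 × 𝒜 × ℝ, Gbarπ p.1 ∂μβ := by
          rw [integral_sub intWInd intWGb]
      _ = ((∫ p : 𝒳 × 𝒜 × ℝ, w (p.1, p.2.1) * G (p.1, p.2.1) ∂μβ)
            - ∫ p : 𝒳 × 𝒜 × ℝ, w (p.1, p.2.1) * Gbar p.1 p.2.1 ∂μβ)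
            + ∫ p : 𝒳 × 𝒜 × ℝ, Gbarπ p.1 ∂μβ := by
          rw [aux_pullout hm2 hWsm2 intInd BW hGcond]
      _ = ((∫ p : 𝒳 × 𝒜 × ℝ, Hm p.1 ∂μβ) - ∫ p : 𝒳 × 𝒜 × ℝ, Gbarπ p.1 ∂μβ)
            + ∫ p : 𝒳 × 𝒜 × ℝ, Gbarπ p.1 ∂μβ := by
          rw [aux_integral_condexp_eq hm1 hHmcond, aux_integral_condexp_eq hm1 hGbarπcond]
      _ = ∫ p, Hm p.1 ∂μβ := by ring
  -- second moment of F
  have hFF : ∫ p, F p * F p ∂μβ =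
      (∫ p, (w (p.1, p.2.1)) ^ 2 * (G (p.1, p.2.1) * (1 - G (p.1, p.2.1))) ∂μβ)
        + (∫ p, (w (p.1, p.2.1) * (G (p.1, p.2.1) - Gbar p.1 p.2.1)) ^ 2 ∂μβ)
        + 2 * (∫ p, Gbarπ p.1 * Hm p.1 ∂μβ)
        - ∫ p, Gbarπ p.1 * Gbarπ p.1 ∂μβ := by
    calc ∫ p, F p * F p ∂μβ
        = ∫ p : 𝒳 × 𝒜 × ℝ,
            (w (p.1, p.2.1) ^ 2 * Gbar p.1 p.2.1 ^ 2
              - 2 * (Gbarπ p.1 * (w (p.1, p.2.1) * Gbar p.1 p.2.1))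
              + Gbarπ p.1 * Gbarπ p.1)
            + (w (p.1, p.2.1) ^ 2 * (1 - 2 * Gbar p.1 p.2.1)
                + 2 * (w (p.1, p.2.1) * Gbarπ p.1))
              * (if p.2.2 ≤ t then (1:ℝ) else 0) ∂μβ := by
          refine integral_congr_ae (Filter.Eventually.of_forall fun p => ?_)
          simp only [hFdef]
          by_cases h : p.2.2 ≤ t <;> simp [h] <;> ring
      _ = (∫ p : 𝒳 × 𝒜 × ℝ,
            (w (p.1, p.2.1) ^ 2 * Gbar p.1 p.2.1 ^ 2
              - 2 * (Gbarπ p.1 * (w (p.1, p.2.1) * Gbar p.1 p.2.1))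
              + Gbarπ p.1 * Gbarπ p.1) ∂μβ)
            + ∫ p : 𝒳 × 𝒜 × ℝ,
              (w (p.1, p.2.1) ^ 2 * (1 - 2 * Gbar p.1 p.2.1)
                + 2 * (w (p.1, p.2.1) * Gbarπ p.1))
                * (if p.2.2 ≤ t then (1:ℝ) else 0) ∂μβ :=
          integral_add intc intφInd
      _ = (∫ p : 𝒳 × 𝒜 × ℝ,
            (w (p.1, p.2.1) ^ 2 * Gbar p.1 p.2.1 ^ 2
              - 2 * (Gbarπ p.1 * (w (p.1, p.2.1) * Gbar p.1 p.2.1))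
              + Gbarπ p.1 * Gbarπ p.1) ∂μβ)
            + ∫ p : 𝒳 × 𝒜 × ℝ,
              (w (p.1, p.2.1) ^ 2 * (1 - 2 * Gbar p.1 p.2.1)
                + 2 * (w (p.1, p.2.1) * Gbarπ p.1))
                * G (p.1, p.2.1) ∂μβ := by
          rw [aux_pullout hm2 hφsm intInd hφB hGcond]
      _ = ∫ p : 𝒳 × 𝒜 × ℝ,
            ((w (p.1, p.2.1) ^ 2 * Gbar p.1 p.2.1 ^ 2
              - 2 * (Gbarπ p.1 * (w (p.1, p.2.1) * Gbar p.1 p.2.1))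
              + Gbarπ p.1 * Gbarπ p.1)
            + (w (p.1, p.2.1) ^ 2 * (1 - 2 * Gbar p.1 p.2.1)
                + 2 * (w (p.1, p.2.1) * Gbarπ p.1))
              * G (p.1, p.2.1)) ∂μβ := (integral_add intc intφGf).symm
      _ = ∫ p : 𝒳 × 𝒜 × ℝ,
            ((w (p.1, p.2.1)) ^ 2 * (G (p.1, p.2.1) * (1 - G (p.1, p.2.1)))
              + (w (p.1, p.2.1) * (G (p.1, p.2.1) - Gbar p.1 p.2.1)) ^ 2)
            + (2 * (Gbarπ p.1 * (w (p.1, p.2.1) * G (p.1, p.2.1)))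
              - 2 * (Gbarπ p.1 * (w (p.1, p.2.1) * Gbar p.1 p.2.1))
              + Gbarπ p.1 * Gbarπ p.1) ∂μβ := by
          refine integral_congr_ae (Filter.Eventually.of_forall fun p => ?_)
          ring
      _ = ((∫ p : 𝒳 × 𝒜 × ℝ,
              (w (p.1, p.2.1)) ^ 2 * (G (p.1, p.2.1) * (1 - G (p.1, p.2.1))) ∂μβ)
            + ∫ p : 𝒳 × 𝒜 × ℝ,
              (w (p.1, p.2.1) * (G (p.1, p.2.1) - Gbar p.1 p.2.1)) ^ 2 ∂μβ)
          + ((2 * ∫ p : 𝒳 × 𝒜 × ℝ, Gbarπ p.1 * (w (p.1, p.2.1) * G (p.1, p.2.1)) ∂μβ)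
            - (2 * ∫ p : 𝒳 × 𝒜 × ℝ, Gbarπ p.1 * (w (p.1, p.2.1) * Gbar p.1 p.2.1) ∂μβ)
            + ∫ p : 𝒳 × 𝒜 × ℝ, Gbarπ p.1 * Gbarπ p.1 ∂μβ) := by
          rw [integral_add intA12 intRest,
            integral_add intA1 intWGfGb2,
            integral_add intsub2 intGpGp,
            integral_sub int2GpWGf int2GpWGb,
            integral_const_mul, integral_const_mul]
      _ = ((∫ p : 𝒳 × 𝒜 × ℝ,
              (w (p.1, p.2.1)) ^ 2 * (G (p.1, p.2.1) * (1 - G (p.1, p.2.1))) ∂μβ)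
            + ∫ p : 𝒳 × 𝒜 × ℝ,
              (w (p.1, p.2.1) * (G (p.1, p.2.1) - Gbar p.1 p.2.1)) ^ 2 ∂μβ)
          + ((2 * ∫ p : 𝒳 × 𝒜 × ℝ, Gbarπ p.1 * Hm p.1 ∂μβ)
            - (2 * ∫ p : 𝒳 × 𝒜 × ℝ, Gbarπ p.1 * Gbarπ p.1 ∂μβ)
            + ∫ p : 𝒳 × 𝒜 × ℝ, Gbarπ p.1 * Gbarπ p.1 ∂μβ) := by
          rw [aux_pullout hm1 hGpsm1 intWGf BGp hHmcond,
            aux_pullout hm1 hGpsm1 intWGb BGp hGbarπcond]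
      _ = (∫ p, (w (p.1, p.2.1)) ^ 2 * (G (p.1, p.2.1) * (1 - G (p.1, p.2.1))) ∂μβ)
            + (∫ p, (w (p.1, p.2.1) * (G (p.1, p.2.1) - Gbar p.1 p.2.1)) ^ 2 ∂μβ)
            + 2 * (∫ p, Gbarπ p.1 * Hm p.1 ∂μβ)
            - ∫ p, Gbarπ p.1 * Gbarπ p.1 ∂μβ := by ring
  -- A2 = E Kd
  have hA2Kd : (∫ p, (w (p.1, p.2.1) * (G (p.1, p.2.1) - Gbar p.1 p.2.1)) ^ 2 ∂μβ)
      = ∫ p, Kd p.1 ∂μβ := aux_integral_condexp_eq hm1 hKdcond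
  -- Hd = Hm - Gbarπ a.e.
  have hHdae : (fun p : 𝒳 × 𝒜 × ℝ => Hd p.1)
      =ᵐ[μβ] fun p => Hm p.1 - Gbarπ p.1 := by
    have e1 : (fun p : 𝒳 × 𝒜 × ℝ => w (p.1, p.2.1) * (G (p.1, p.2.1) - Gbar p.1 p.2.1))
        =ᵐ[μβ] (fun p : 𝒳 × 𝒜 × ℝ => w (p.1, p.2.1) * G (p.1, p.2.1))
          - fun p : 𝒳 × 𝒜 × ℝ => w (p.1, p.2.1) * Gbar p.1 p.2.1 :=
      Filter.Eventually.of_forall fun p => by simp [mul_sub]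
    have e2 := (condExp_congr_ae
      (m := MeasurableSpace.comap (fun p : 𝒳 × 𝒜 × ℝ => p.1) inferInstance) e1).trans
      (condExp_sub intWGf intWGb _)
    have e3 := e2.trans (hHmcond.sub hGbarπcond)
    refine hHdcond.symm.trans (e3.mono fun p hp => ?_)
    simpa using hp
  have hHd2 : ∫ p, Hd p.1 ^ 2 ∂μβ =
      (∫ p, Hm p.1 ^ 2 ∂μβ) - 2 * (∫ p, Gbarπ p.1 * Hm p.1 ∂μβ)
        + ∫ p, Gbarπ p.1 * Gbarπ p.1 ∂μβ := by
    calc ∫ p, Hd p.1 ^ 2 ∂μβ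
        = ∫ p : 𝒳 × 𝒜 × ℝ, (Hm p.1 ^ 2 + Gbarπ p.1 * Gbarπ p.1)
            - 2 * (Gbarπ p.1 * Hm p.1) ∂μβ := by
          refine integral_congr_ae (hHdae.mono fun p hp => ?_)
          have hp' : Hd p.1 = Hm p.1 - Gbarπ p.1 := hp
          show Hd p.1 ^ 2 = Hm p.1 ^ 2 + Gbarπ p.1 * Gbarπ p.1 - 2 * (Gbarπ p.1 * Hm p.1)
          rw [hp']; ring
      _ = (∫ p : 𝒳 × 𝒜 × ℝ, Hm p.1 ^ 2 + Gbarπ p.1 * Gbarπ p.1 ∂μβ)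
            - ∫ p : 𝒳 × 𝒜 × ℝ, 2 * (Gbarπ p.1 * Hm p.1) ∂μβ :=
          integral_sub (intHm2.add intGpGp) (intGpHm.const_mul 2)
      _ = (∫ p, Hm p.1 ^ 2 ∂μβ) - 2 * (∫ p, Gbarπ p.1 * Hm p.1 ∂μβ)
            + ∫ p, Gbarπ p.1 * Gbarπ p.1 ∂μβ := by
          rw [integral_add intHm2 intGpGp, integral_const_mul]; ring
  have hKdsplit : ∫ p, (Kd p.1 - (Hd p.1) ^ 2) ∂μβ
      = (∫ p, Kd p.1 ∂μβ) - ∫ p, Hd p.1 ^ 2 ∂μβ := integral_sub intKd intHd2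
  -- ===== the product-measure part =====
  set Pn : Measure (Fin n → 𝒳 × 𝒜 × ℝ) := Measure.pi fun _ : Fin n => μβ with hPndef
  haveI : IsProbabilityMeasure Pn := by rw [hPndef]; infer_instance
  have hkey : ∀ g : Fin n → (𝒳 × 𝒜 × ℝ) → ℝ,
      (∫ ωs, ∏ k, g k (ωs k) ∂Pn) = ∏ k, ∫ p, g k p ∂μβ := by
    intro g
    letI : MeasureSpace (𝒳 × 𝒜 × ℝ) := ⟨μβ⟩
    haveI : SigmaFinite (volume : Measure (𝒳 × 𝒜 × ℝ)) := inferInstanceAs (SigmaFinite μβ)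
    have h := MeasureTheory.integral_fintype_prod_eq_prod (ι := Fin n)
      (E := fun _ => 𝒳 × 𝒜 × ℝ) g (μ := fun _ => μβ)
    exact h
  have hone : ∀ (φ : (𝒳 × 𝒜 × ℝ) → ℝ) (i : Fin n),
      (∫ ωs, φ (ωs i) ∂Pn) = ∫ p, φ p ∂μβ := by
    intro φ i
    calc (∫ ωs, φ (ωs i) ∂Pn)
        = ∫ ωs : Fin n → 𝒳 × 𝒜 × ℝ, ∏ k, (if k = i then φ (ωs k) else (1:ℝ)) ∂Pn := by
          refine integral_congr_ae (Filter.Eventually.of_forall fun ωs => ?_)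
          have h2 : ∏ k, (if k = i then φ (ωs k) else (1:ℝ))
              = if i = i then φ (ωs i) else (1:ℝ) :=
            Finset.prod_eq_single i (fun b _ hb => if_neg hb)
              (fun h => absurd (Finset.mem_univ i) h)
          rw [if_pos rfl] at h2
          exact h2.symm
      _ = ∏ k, ∫ p, (if k = i then φ p else (1:ℝ)) ∂μβ :=
          hkey (fun k p => if k = i then φ p else 1)
      _ = ∫ p, φ p ∂μβ := by
          have h2 : ∏ k, (∫ p, (if k = i then φ p else (1:ℝ)) ∂μβ)
              = ∫ p, (if i = i then φ p else (1:ℝ)) ∂μβ :=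
            Finset.prod_eq_single i (fun b _ hb => by simp [hb])
              (fun h => absurd (Finset.mem_univ i) h)
          rw [h2]
          simp
  have hpair : ∀ i j : Fin n, i ≠ j →
      (∫ ωs, F (ωs i) * F (ωs j) ∂Pn) = (∫ p, F p ∂μβ) * ∫ p, F p ∂μβ := by
    intro i j hij
    have hpt : ∀ ωs : Fin n → 𝒳 × 𝒜 × ℝ,
        F (ωs i) * F (ωs j)
          = ∏ k, (if k = i then F (ωs k) else if k = j then F (ωs k) else 1) := by
      intro ωs
      have hsub : ∀ x ∈ Finset.univ, x ∉ ({i, j} : Finset (Fin n)) →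
          (if x = i then F (ωs x) else if x = j then F (ωs x) else 1) = 1 := by
        intro x _ hx
        simp only [Finset.mem_insert, Finset.mem_singleton, not_or] at hx
        simp [hx.1, hx.2]
      calc F (ωs i) * F (ωs j)
          = ∏ k ∈ ({i, j} : Finset (Fin n)),
              (if k = i then F (ωs k) else if k = j then F (ωs k) else 1) := by
            rw [Finset.prod_pair hij]
            simp [Ne.symm hij]
        _ = ∏ k, (if k = i then F (ωs k) else if k = j then F (ωs k) else 1) :=
            Finset.prod_subset (Finset.subset_univ _) hsub
    calc (∫ ωs, F (ωs i) * F (ωs j) ∂Pn)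
        = ∫ ωs : Fin n → 𝒳 × 𝒜 × ℝ,
            ∏ k, (if k = i then F (ωs k) else if k = j then F (ωs k) else (1:ℝ)) ∂Pn :=
          integral_congr_ae (Filter.Eventually.of_forall hpt)
      _ = ∏ k, ∫ p, (if k = i then F p else if k = j then F p else 1) ∂μβ :=
          hkey (fun k p => if k = i then F p else if k = j then F p else 1)
      _ = ∏ k ∈ ({i, j} : Finset (Fin n)),
            ∫ p, (if k = i then F p else if k = j then F p else 1) ∂μβ := by
          refine (Finset.prod_subset (Finset.subset_univ _) fun x _ hx => ?_).symm
          simp only [Finset.mem_insert, Finset.mem_singleton, not_or] at hx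
          simp [hx.1, hx.2]
      _ = (∫ p, F p ∂μβ) * ∫ p, F p ∂μβ := by
          rw [Finset.prod_pair hij]
          simp [Ne.symm hij]
  obtain ⟨CF, hCF⟩ := hFB
  have haePn : ∀ i : Fin n, ∀ᵐ ωs ∂Pn, |F (ωs i)| ≤ CF := by
    intro i
    rw [ae_iff] at hCF ⊢
    have hset : {ωs : Fin n → 𝒳 × 𝒜 × ℝ | ¬|F (ωs i)| ≤ CF}
        = Function.eval i ⁻¹' {p : 𝒳 × 𝒜 × ℝ | ¬|F p| ≤ CF} := rfl
    rw [hset, hPndef]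
    exact Measure.pi_eval_preimage_null _ hCF
  have hintF : ∀ i : Fin n, Integrable (fun ωs => F (ωs i)) Pn := fun i =>
    aux_intBdd (hFMeas.comp (measurable_pi_apply i)).aestronglyMeasurable (haePn i)
  have hintFF : ∀ i j : Fin n, Integrable (fun ωs => F (ωs i) * F (ωs j)) Pn := by
    intro i j
    refine aux_intBdd (((hFMeas.comp (measurable_pi_apply i)).mul
      (hFMeas.comp (measurable_pi_apply j))).aestronglyMeasurable) (C := |CF| * |CF|) ?_
    filter_upwards [haePn i, haePn j] with ωs h1 h2
    rw [abs_mul]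
    exact mul_le_mul (h1.trans (le_abs_self _)) (h2.trans (le_abs_self _)) (abs_nonneg _)
      (abs_nonneg _)
  have hS1 : (∫ ωs, ∑ i : Fin n, F (ωs i) ∂Pn) = n * ∫ p, F p ∂μβ := by
    rw [integral_finset_sum Finset.univ fun i _ => hintF i]
    simp_rw [hone F]
    rw [Finset.sum_const, Finset.card_univ, Fintype.card_fin, nsmul_eq_mul]
  have hS2 : (∫ ωs, (∑ i : Fin n, F (ωs i)) ^ 2 ∂Pn)
      = n * (∫ p, F p * F p ∂μβ) + ((n:ℝ) * n - n) * (∫ p, F p ∂μβ) ^ 2 := by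
    have hpt : ∀ ωs : Fin n → 𝒳 × 𝒜 × ℝ,
        (∑ i : Fin n, F (ωs i)) ^ 2 = ∑ i : Fin n, ∑ j : Fin n, F (ωs i) * F (ωs j) := by
      intro ωs; rw [sq, Finset.sum_mul_sum]
    rw [integral_congr_ae (Filter.Eventually.of_forall hpt)]
    rw [integral_finset_sum Finset.univ fun i _ =>
      integrable_finset_sum Finset.univ fun j _ => hintFF i j]
    have hrow : ∀ i : Fin n, (∫ ωs, ∑ j : Fin n, F (ωs i) * F (ωs j) ∂Pn)
        = (∫ p, F p * F p ∂μβ) + ((n:ℝ) - 1) * (∫ p, F p ∂μβ) ^ 2 := by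
      intro i
      rw [integral_finset_sum Finset.univ fun j _ => hintFF i j]
      rw [← Finset.add_sum_erase Finset.univ _ (Finset.mem_univ i)]
      have hdiag : (∫ ωs, F (ωs i) * F (ωs i) ∂Pn) = ∫ p, F p * F p ∂μβ :=
        hone (fun p => F p * F p) i
      rw [hdiag]
      have hoff : ∀ j ∈ Finset.univ.erase i,
          (∫ ωs, F (ωs i) * F (ωs j) ∂Pn) = (∫ p, F p ∂μβ) * ∫ p, F p ∂μβ := fun j hj =>
        hpair i j (Ne.symm (Finset.mem_erase.1 hj).1)
      rw [Finset.sum_congr rfl hoff, Finset.sum_const,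
        Finset.card_erase_of_mem (Finset.mem_univ i), Finset.card_univ, Fintype.card_fin,
        nsmul_eq_mul, Nat.cast_sub hn, Nat.cast_one, sq]
    rw [Finset.sum_congr rfl fun i _ => hrow i, Finset.sum_const, Finset.card_univ,
      Fintype.card_fin, nsmul_eq_mul]
    ring
  -- ===== final assembly =====
  have hnR : (n:ℝ) ≠ 0 := Nat.cast_ne_zero.2 hn.ne'
  have hmain :
      (∫ ωs, ((1 / (n:ℝ)) * ∑ i : Fin n, F (ωs i)) ^ 2 ∂Pn)
        - (∫ ωs, (1 / (n:ℝ)) * ∑ i : Fin n, F (ωs i) ∂Pn) ^ 2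
      = (1 / (n:ℝ)) *
        ((∫ p, (w (p.1, p.2.1)) ^ 2 * (G (p.1, p.2.1) * (1 - G (p.1, p.2.1))) ∂μβ)
          + ((∫ p, (Hm p.1) ^ 2 ∂μβ) - (∫ p, Hm p.1 ∂μβ) ^ 2)
          + (∫ p, (Kd p.1 - (Hd p.1) ^ 2) ∂μβ)) := by
    have hL1 : (∫ ωs, ((1 / (n:ℝ)) * ∑ i : Fin n, F (ωs i)) ^ 2 ∂Pn)
        = (1 / (n:ℝ)) ^ 2 * ∫ ωs, (∑ i : Fin n, F (ωs i)) ^ 2 ∂Pn := by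
      simp_rw [mul_pow]
      exact integral_const_mul _ _
    have hL2 : (∫ ωs, (1 / (n:ℝ)) * ∑ i : Fin n, F (ωs i) ∂Pn)
        = (1 / (n:ℝ)) * ∫ ωs, ∑ i : Fin n, F (ωs i) ∂Pn := integral_const_mul _ _
    rw [hL1, hL2, hS1, hS2, hFF, hEF, hKdsplit, ← hA2Kd, hHd2]
    field_simp
    ring
  calc (∫ ωs, ((1 / (n:ℝ)) * ∑ i : Fin n,
          (w ((ωs i).1, (ωs i).2.1) *
              ((if (ωs i).2.2 ≤ t then (1:ℝ) else 0) - Gbar (ωs i).1 (ωs i).2.1)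
            + Gbarπ (ωs i).1)) ^ 2 ∂(Measure.pi fun _ : Fin n => μβ))
      - (∫ ωs, (1 / (n:ℝ)) * ∑ i : Fin n,
          (w ((ωs i).1, (ωs i).2.1) *
              ((if (ωs i).2.2 ≤ t then (1:ℝ) else 0) - Gbar (ωs i).1 (ωs i).2.1)
            + Gbarπ (ωs i).1) ∂(Measure.pi fun _ : Fin n => μβ)) ^ 2
      = (∫ ωs, ((1 / (n:ℝ)) * ∑ i : Fin n, F (ωs i)) ^ 2 ∂Pn)
        - (∫ ωs, (1 / (n:ℝ)) * ∑ i : Fin n, F (ωs i) ∂Pn) ^ 2 := rfl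
    _ = _ := hmain
end
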